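/- Let θ be a nonzero real number and define, on functions ξ : ℝ → ℂ, the connection operators (∇₁ξ)(s) = −(2πi s/θ)·ξ(s) and (∇₂ξ)(s) = ξ'(s). Then the curvature is constant: for every differentiable function ξ : ℝ → ℂ one has (∇₁(∇₂ξ))(s) − (∇₂(∇₁ξ))(s) = (2πi/θ)·ξ(s) for all s ∈ ℝ; i.e. Ω = ∇₁∇₂ − ∇₂∇₁ is the scalar operator (2πi/θ)·Id. In particular, since the module S(ℝ) has dimension θ over A_θ, the pairing of dimension and curvature yields the integrality phenomenon θ × (1/θ) = 1. -/

import Mathlib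

/-- `(∇₁ξ)(s) = −(2πi s/θ)·ξ(s)`. -/
noncomputable def nabla₁ (θ : ℝ) (ξ : ℝ → ℂ) : ℝ → ℂ :=
  fun s => -(2 * (Real.pi : ℂ) * Complex.I * (s : ℂ) / (θ : ℂ)) * ξ s

/-- `(∇₂ξ)(s) = ξ'(s)`. -/
noncomputable def nabla₂ (ξ : ℝ → ℂ) : ℝ → ℂ := deriv ξ

/-- **The curvature of the canonical connection on the Schwartz module is constant**:
`(∇₁∇₂ − ∇₂∇₁)ξ = (2πi/θ)·ξ`, and pairing the dimension `θ` of the module with the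
curvature `1/θ` yields the integer `θ × (1/θ) = 1`. -/
theorem connection_curvature_constant (θ : ℝ) (hθ : θ ≠ 0)
    (ξ : ℝ → ℂ) (hξ : Differentiable ℝ ξ) :
    (∀ s : ℝ, nabla₁ θ (nabla₂ ξ) s - nabla₂ (nabla₁ θ ξ) s =
      (2 * (Real.pi : ℂ) * Complex.I / (θ : ℂ)) * ξ s) ∧
    θ * (1 / θ) = 1 := by
  refine ⟨fun s => ?_, mul_one_div_cancel hθ⟩
  have hcoef : HasDerivAt (fun t : ℝ => -(2 * (Real.pi : ℂ) * Complex.I * (t : ℂ) / (θ : ℂ)))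
      (-(2 * (Real.pi : ℂ) * Complex.I / (θ : ℂ))) s := by
    have h := ((hasDerivAt_id s).ofReal_comp.const_mul
      (-(2 * (Real.pi : ℂ) * Complex.I / (θ : ℂ))))
    simp only [id_eq, Complex.ofReal_one, mul_one] at h
    convert h using 2 with t
    · rfl
    ring
  have hprod : HasDerivAt (nabla₁ θ ξ)
      (-(2 * (Real.pi : ℂ) * Complex.I / (θ : ℂ)) * ξ s +
        -(2 * (Real.pi : ℂ) * Complex.I * (s : ℂ) / (θ : ℂ)) * deriv ξ s) s :=
    hcoef.mul (hξ s).hasDerivAt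
  have hd : nabla₂ (nabla₁ θ ξ) s =
      -(2 * (Real.pi : ℂ) * Complex.I / (θ : ℂ)) * ξ s +
        -(2 * (Real.pi : ℂ) * Complex.I * (s : ℂ) / (θ : ℂ)) * deriv ξ s :=
    hprod.deriv
  simp only [nabla₁, nabla₂] at hd ⊢
  rw [hd]
  ring
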